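/- (Part 1 of Lemma lemma3.) Let N_a, N_b ≥ 1, 𝒩 = N_a + N_b, κ : ℤ → ℝ with κ_n = κ_{n mod 𝒩}, κ_1 < ... < κ_𝒩, and K_n(x) = κ_n x_1 + κ_n² x_2. Fix n ∈ ℤ and let y_n = (κ_{n+N_b}² − κ_n², κ_n − κ_{n+N_b}) ∈ ℝ². Then for any l ∈ {n,...,n+N_b} and m ∈ {n+N_b,...,𝒩+n}, the quantity K_l(α y_n) − K_m(α y_n) (as a function of α > 0) satisfies: K_l(y_n) − K_m(y_n) > 0 unless (l mod 𝒩, m mod 𝒩) ∈ {(n,n),(n,n+N_b),(n+N_b,n),(n+N_b,n+N_b)} (mod 𝒩), in which case K_l(y_n) − K_m(y_n) = 0. -/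

import Mathlib

/-- Part 1 of Lemma 3: sign of K_l(y_n) − K_m(y_n). -/
theorem stmt_8 (Na Nb : ℕ) (hNa : 1 ≤ Na) (hNb : 1 ≤ Nb)
    (N : ℕ) (hN : N = Na + Nb)
    (κ : ℤ → ℝ)
    (hper : ∀ n : ℤ, κ (n + N) = κ n)
    (hmono : ∀ m n : ℤ, 1 ≤ m → m < n → n ≤ N → κ m < κ n)
    (K : ℤ → ℝ × ℝ → ℝ)
    (hK : ∀ j y, K j y = κ j * y.1 + κ j ^ 2 * y.2)
    (n : ℤ) (y : ℝ × ℝ)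
    (hy : y = (κ (n + Nb) ^ 2 - κ n ^ 2, κ n - κ (n + Nb)))
    (l m : ℤ)
    (hl₁ : n ≤ l) (hl₂ : l ≤ n + Nb)
    (hm₁ : n + Nb ≤ m) (hm₂ : m ≤ N + n) :
    (((l ≡ n [ZMOD N] ∨ l ≡ n + Nb [ZMOD N]) ∧
        (m ≡ n [ZMOD N] ∨ m ≡ n + Nb [ZMOD N])) →
      K l y - K m y = 0) ∧
    ((¬ ((l ≡ n [ZMOD N] ∨ l ≡ n + Nb [ZMOD N]) ∧
        (m ≡ n [ZMOD N] ∨ m ≡ n + Nb [ZMOD N]))) →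
      0 < K l y - K m y) := by
  subst hy
  have hNzpos : (0:ℤ) < (N:ℤ) := by exact_mod_cast Nat.pos_of_ne_zero (by omega)
  have hNb1 : (1:ℤ) ≤ (Nb:ℤ) := by exact_mod_cast hNb
  have hNbN : (Nb:ℤ) < (N:ℤ) := by
    have : Nb < N := by omega
    exact_mod_cast this
  -- periodicity for any multiple
  have hper2 : ∀ (j t : ℤ), κ (j + t * N) = κ j := by
    intro j t
    induction t using Int.induction_on with
    | zero => simp
    | succ k ih =>
        have h := hper (j + (k : ℤ) * (N:ℤ))
        rw [show j + ((k:ℤ) + 1) * (N:ℤ) = j + (k:ℤ) * (N:ℤ) + (N:ℤ) by ring, h, ih]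
    | pred k ih =>
        have h := hper (j + (-(k:ℤ) - 1) * (N:ℤ))
        rw [show j + (-(k:ℤ) - 1) * (N:ℤ) + (N:ℤ) = j + (-(k:ℤ)) * (N:ℤ) by ring, ih] at h
        rw [h]
  have hper3 : ∀ j : ℤ, (N:ℤ) < j → κ j = κ (j - N) := by
    intro j _
    have h := hper2 (j - N) 1
    rw [show j - (N:ℤ) + 1 * (N:ℤ) = j by ring] at h
    exact h
  have hcong : ∀ j k : ℤ, j ≡ k [ZMOD (N:ℕ)] → κ j = κ k := by
    intro j k h
    obtain ⟨t, ht⟩ := h.dvd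
    have hk : k = j + t * (N:ℤ) := by linarith [ht]
    rw [hk, hper2]
  have hle : ∀ i k : ℤ, 1 ≤ i → i ≤ k → k ≤ (N:ℤ) → κ i ≤ κ k := by
    intro i k h1 h2 h3
    rcases eq_or_lt_of_le h2 with h | h
    · rw [h]
    · exact (hmono i k h1 h h3).le
  -- the factorization identity
  have hD : K l (κ (n + Nb) ^ 2 - κ n ^ 2, κ n - κ (n + Nb)) -
      K m (κ (n + Nb) ^ 2 - κ n ^ 2, κ n - κ (n + Nb)) =
      (κ l - κ m) * (κ (n + Nb) - κ n) * (κ n + κ (n + Nb) - κ l - κ m) := by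
    rw [hK, hK]; ring
  constructor
  · rintro ⟨hl, hm⟩
    have hu : κ l = κ n ∨ κ l = κ (n + Nb) := hl.imp (hcong l n) (hcong l (n + Nb))
    have hv : κ m = κ n ∨ κ m = κ (n + Nb) := hm.imp (hcong m n) (hcong m (n + Nb))
    rw [hD]
    rcases hu with h1 | h1 <;> rcases hv with h2 | h2 <;> rw [h1, h2] <;> ring
  · intro hnd
    -- representative r of n in [1, N]
    obtain ⟨q, r, hnr, hr1, hr2⟩ : ∃ q r : ℤ, n = r + (N:ℤ) * q ∧ 1 ≤ r ∧ r ≤ (N:ℤ) := by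
      refine ⟨(n - 1) / (N:ℤ), (n - 1) % (N:ℤ) + 1, ?_, ?_, ?_⟩
      · have := Int.emod_add_mul_ediv (n - 1) (N:ℤ); omega
      · have := Int.emod_nonneg (n - 1) (ne_of_gt hNzpos); omega
      · have := Int.emod_lt_of_pos (n - 1) hNzpos; omega
    have hshift : ∀ t : ℤ, κ (n + t) = κ (r + t) := by
      intro t
      rw [show n + t = (r + t) + q * (N:ℤ) by rw [hnr]; ring, hper2]
    have ha : κ n = κ r := by simpa using hshift 0
    have hb : κ (n + Nb) = κ (r + Nb) := hshift Nb
    have hκl : κ l = κ (r + (l - n)) := by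
      have h := hshift (l - n); rw [show n + (l - n) = l by ring] at h; exact h
    have hκm : κ m = κ (r + (m - n)) := by
      have h := hshift (m - n); rw [show n + (m - n) = m by ring] at h; exact h
    set i := r + (l - n) with hidef
    set j := r + (m - n) with hjdef
    have hi1 : r ≤ i := by omega
    have hi2 : i ≤ r + Nb := by omega
    have hj1 : r + Nb ≤ j := by omega
    have hj2 : j ≤ r + N := by omega
    -- easy directions of the congruence characterizations
    have hmod : ∀ a b : ℤ, b - a = 0 ∨ b - a = (N:ℤ) ∨ a - b = (N:ℤ) → a ≡ b [ZMOD (N:ℕ)] := by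
      intro a b h
      rw [Int.modEq_iff_dvd]
      rcases h with h | h | h
      · exact ⟨0, by omega⟩
      · exact ⟨1, by omega⟩
      · exact ⟨-1, by omega⟩
    rw [hD, hκl, hκm, ha, hb]
    rcases not_and_or.mp hnd with hP | hQ
    · -- l is not congruent to n nor n + Nb
      push_neg at hP
      obtain ⟨hP1, hP2⟩ := hP
      have hir : i ≠ r := fun h => hP1 (hmod l n (by omega))
      have hib : i ≠ r + Nb := fun h => hP2 (hmod l (n + Nb) (by omega))
      rcases le_or_gt (r + (Nb:ℤ)) (N:ℤ) with hA | hB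
      · -- case A : a < κ i < b
        have hu1 : κ r < κ i := hmono r i hr1 (by omega) (by omega)
        have hu2 : κ i < κ (r + Nb) := hmono i (r + Nb) (by omega) (by omega) hA
        rcases le_or_gt j (N:ℤ) with hjN | hjN
        · have hv : κ (r + Nb) ≤ κ j := hle (r + Nb) j (by omega) hj1 hjN
          linarith [mul_pos (mul_pos (show (0:ℝ) < κ j - κ i by linarith)
            (show (0:ℝ) < κ (r + Nb) - κ r by linarith))
            (show (0:ℝ) < κ i + κ j - κ r - κ (r + Nb) by linarith)]
        · rw [hper3 j hjN]
          have hv : κ (j - N) ≤ κ r := hle (j - N) r (by omega) (by omega) hr2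
          linarith [mul_pos (mul_pos (show (0:ℝ) < κ i - κ (j - N) by linarith)
            (show (0:ℝ) < κ (r + Nb) - κ r by linarith))
            (show (0:ℝ) < κ r + κ (r + Nb) - κ i - κ (j - N) by linarith)]
      · -- case B
        rw [hper3 (r + Nb) hB, hper3 j (by omega)]
        have hba : κ (r + Nb - N) < κ r := hmono (r + Nb - N) r (by omega) (by omega) hr2
        have hv1 : κ (r + Nb - N) ≤ κ (j - N) :=
          hle (r + Nb - N) (j - N) (by omega) (by omega) (by omega)
        have hv2 : κ (j - N) ≤ κ r := hle (j - N) r (by omega) (by omega) hr2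
        rcases le_or_gt i (N:ℤ) with hiN | hiN
        · have hu : κ r < κ i := hmono r i hr1 (by omega) hiN
          linarith [mul_pos (mul_pos (show (0:ℝ) < κ i - κ (j - N) by linarith)
            (show (0:ℝ) < κ r - κ (r + Nb - N) by linarith))
            (show (0:ℝ) < κ i + κ (j - N) - κ r - κ (r + Nb - N) by linarith)]
        · rw [hper3 i hiN]
          have hu : κ (i - N) < κ (r + Nb - N) :=
            hmono (i - N) (r + Nb - N) (by omega) (by omega) (by omega)
          linarith [mul_pos (mul_pos (show (0:ℝ) < κ (j - N) - κ (i - N) by linarith)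
            (show (0:ℝ) < κ r - κ (r + Nb - N) by linarith))
            (show (0:ℝ) < κ r + κ (r + Nb - N) - κ (i - N) - κ (j - N) by linarith)]
    · -- m is not congruent to n nor n + Nb
      push_neg at hQ
      obtain ⟨hQ1, hQ2⟩ := hQ
      have hjn : j ≠ r + N := fun h => hQ1 (hmod m n (by omega))
      have hjb : j ≠ r + Nb := fun h => hQ2 (hmod m (n + Nb) (by omega))
      rcases le_or_gt (r + (Nb:ℤ)) (N:ℤ) with hA | hB
      · have hab : κ r < κ (r + Nb) := hmono r (r + Nb) hr1 (by omega) hA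
        have hu1 : κ r ≤ κ i := hle r i hr1 hi1 (by omega)
        have hu2 : κ i ≤ κ (r + Nb) := hle i (r + Nb) (by omega) hi2 hA
        rcases le_or_gt j (N:ℤ) with hjN | hjN
        · have hv : κ (r + Nb) < κ j := hmono (r + Nb) j (by omega) (by omega) hjN
          linarith [mul_pos (mul_pos (show (0:ℝ) < κ j - κ i by linarith)
            (show (0:ℝ) < κ (r + Nb) - κ r by linarith))
            (show (0:ℝ) < κ i + κ j - κ r - κ (r + Nb) by linarith)]
        · rw [hper3 j hjN]
          have hv : κ (j - N) < κ r := hmono (j - N) r (by omega) (by omega) hr2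
          linarith [mul_pos (mul_pos (show (0:ℝ) < κ i - κ (j - N) by linarith)
            (show (0:ℝ) < κ (r + Nb) - κ r by linarith))
            (show (0:ℝ) < κ r + κ (r + Nb) - κ i - κ (j - N) by linarith)]
      · rw [hper3 (r + Nb) hB, hper3 j (by omega)]
        have hv1 : κ (r + Nb - N) < κ (j - N) :=
          hmono (r + Nb - N) (j - N) (by omega) (by omega) (by omega)
        have hv2 : κ (j - N) < κ r := hmono (j - N) r (by omega) (by omega) hr2
        rcases le_or_gt i (N:ℤ) with hiN | hiN
        · have hu : κ r ≤ κ i := hle r i hr1 hi1 hiN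
          linarith [mul_pos (mul_pos (show (0:ℝ) < κ i - κ (j - N) by linarith)
            (show (0:ℝ) < κ r - κ (r + Nb - N) by linarith))
            (show (0:ℝ) < κ i + κ (j - N) - κ r - κ (r + Nb - N) by linarith)]
        · rw [hper3 i hiN]
          have hu : κ (i - N) ≤ κ (r + Nb - N) :=
            hle (i - N) (r + Nb - N) (by omega) (by omega) (by omega)
          linarith [mul_pos (mul_pos (show (0:ℝ) < κ (j - N) - κ (i - N) by linarith)
            (show (0:ℝ) < κ r - κ (r + Nb - N) by linarith))
            (show (0:ℝ) < κ r + κ (r + Nb - N) - κ (i - N) - κ (j - N) by linarith)]
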